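/- Let V = V₁ ⊕ V₂ be the Ω-orthogonal decomposition with V₁ = span(p₁, q₁) and V₂ = span(p₂, q₂), and let s₁ = {X ∈ sp(V) : X(V₁) ⊆ V₁ and X(V₂) ⊆ V₂} (so s₁ is isomorphic to sp(V₁) ⊕ sp(V₂) ≅ sl₂(R) ⊕ sl₂(R)). Then a Lie subalgebra h ⊆ s₁ has finite type if and only if both h ∩ {X ∈ s₁ : X(V₂) = 0} and h ∩ {X ∈ s₁ : X(V₁) = 0} have finite type. -/

import Mathlib

open Module

abbrev V4 : Type := Fin 4 → ℝ

noncomputable section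

def Om (u v : V4) : ℝ :=
  -(u 0 * v 2 - u 2 * v 0) - (u 1 * v 3 - u 3 * v 1)

def sp4 : Set (Module.End ℝ V4) :=
  {X | ∀ u v : V4, Om (X u) v + Om u (X v) = 0}

def pp1 : V4 := ![1,0,0,0]
def pp2 : V4 := ![0,1,0,0]
def qq1 : V4 := ![0,0,1,0]
def qq2 : V4 := ![0,0,0,1]

lemma Om_add_left (a b v : V4) : Om (a + b) v = Om a v + Om b v := by
  simp [Om]; ring
lemma Om_smul_left (c : ℝ) (a v : V4) : Om (c • a) v = c * Om a v := by
  simp [Om]; ring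
lemma Om_add_right (u a b : V4) : Om u (a + b) = Om u a + Om u b := by
  simp [Om]; ring
lemma Om_smul_right (c : ℝ) (u a : V4) : Om u (c • a) = c * Om u a := by
  simp [Om]; ring

def quad (u v : V4) : Module.End ℝ V4 where
  toFun w := Om u w • v + Om v w • u
  map_add' a b := by
    rw [Om_add_right, Om_add_right, add_smul, add_smul]; abel
  map_smul' c a := by
    rw [Om_smul_right, Om_smul_right, RingHom.id_apply, mul_smul, mul_smul, smul_add]

def InProl (h : Set (Module.End ℝ V4)) (k : ℕ)
    (T : MultilinearMap ℝ (fun _ : Fin (k+1) => V4) V4) : Prop :=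
  (∀ (σ : Equiv.Perm (Fin (k+1))) (v : Fin (k+1) → V4), (T fun i => v (σ i)) = T v) ∧
  (∀ v : Fin k → V4, ∃ A ∈ h, ∀ w : V4, A w = T (Fin.snoc v w))

def FiniteType (h : Set (Module.End ℝ V4)) : Prop :=
  ∃ k : ℕ, 1 ≤ k ∧
    ∀ T : MultilinearMap ℝ (fun _ : Fin (k+1) => V4) V4, InProl h k T → T = 0

/-- `V₁ = span(p₁,q₁)`. -/
def Vone : Submodule ℝ V4 := Submodule.span ℝ {pp1, qq1}

/-- `V₂ = span(p₂,q₂)`. -/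
def Vtwo : Submodule ℝ V4 := Submodule.span ℝ {pp2, qq2}

/-- `s₁ = {X ∈ sp(V) : X(V₁) ⊆ V₁ and X(V₂) ⊆ V₂}`. -/
def sOne : Set (Module.End ℝ V4) :=
  {X ∈ sp4 | (∀ w ∈ Vone, X w ∈ Vone) ∧ (∀ w ∈ Vtwo, X w ∈ Vtwo)}

/-! ### Auxiliary material -/

/-- Projection onto `V₁` (coordinates 0 and 2). -/
def piOne : V4 →ₗ[ℝ] V4 where
  toFun v := ![v 0, 0, v 2, 0]
  map_add' a b := by funext i; fin_cases i <;> simp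
  map_smul' c a := by funext i; fin_cases i <;> simp

/-- Projection onto `V₂` (coordinates 1 and 3). -/
def piTwo : V4 →ₗ[ℝ] V4 where
  toFun v := ![0, v 1, 0, v 3]
  map_add' a b := by funext i; fin_cases i <;> simp
  map_smul' c a := by funext i; fin_cases i <;> simp

lemma mem_Vone_iff (v : V4) : v ∈ Vone ↔ v 1 = 0 ∧ v 3 = 0 := by
  constructor
  · intro hv
    induction hv using Submodule.span_induction with
    | mem x hx =>
      rcases hx with hx | hx <;> subst hx <;> simp [pp1, qq1]
    | zero => simp
    | add x y _ _ hx hy => simp [hx.1, hx.2, hy.1, hy.2]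
    | smul c x _ hx => simp [hx.1, hx.2]
  · rintro ⟨h1, h3⟩
    have : v = v 0 • pp1 + v 2 • qq1 := by
      funext i; fin_cases i <;> simp [pp1, qq1, h1, h3]
    rw [this]
    exact add_mem (Submodule.smul_mem _ _ (Submodule.subset_span (by simp)))
      (Submodule.smul_mem _ _ (Submodule.subset_span (by simp)))

lemma mem_Vtwo_iff (v : V4) : v ∈ Vtwo ↔ v 0 = 0 ∧ v 2 = 0 := by
  constructor
  · intro hv
    induction hv using Submodule.span_induction with
    | mem x hx =>
      rcases hx with hx | hx <;> subst hx <;> simp [pp2, qq2]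
    | zero => simp
    | add x y _ _ hx hy => simp [hx.1, hx.2, hy.1, hy.2]
    | smul c x _ hx => simp [hx.1, hx.2]
  · rintro ⟨h0, h2⟩
    have : v = v 1 • pp2 + v 3 • qq2 := by
      funext i; fin_cases i <;> simp [pp2, qq2, h0, h2]
    rw [this]
    exact add_mem (Submodule.smul_mem _ _ (Submodule.subset_span (by simp)))
      (Submodule.smul_mem _ _ (Submodule.subset_span (by simp)))

lemma piOne_mem (v : V4) : piOne v ∈ Vone := by
  rw [mem_Vone_iff]; simp [piOne]

lemma piTwo_mem (v : V4) : piTwo v ∈ Vtwo := by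
  rw [mem_Vtwo_iff]; simp [piTwo]

lemma piOne_add_piTwo (v : V4) : piOne v + piTwo v = v := by
  funext i; fin_cases i <;> simp [piOne, piTwo]

lemma Vone_inter_Vtwo {v : V4} (h1 : v ∈ Vone) (h2 : v ∈ Vtwo) : v = 0 := by
  rw [mem_Vone_iff] at h1; rw [mem_Vtwo_iff] at h2
  funext i; fin_cases i
  · exact h2.1
  · exact h1.1
  · exact h2.2
  · exact h1.2

/-- Mixed-argument vanishing: a symmetric prolongation element of a
subalgebra of `sOne` vanishes as soon as one argument lies in `V₁` and
another lies in `V₂`. -/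
lemma mixed_vanish {h : Set (Module.End ℝ V4)} (hsub : h ⊆ sOne) {k : ℕ}
    {T : MultilinearMap ℝ (fun _ : Fin (k+1) => V4) V4} (hT : InProl h k T)
    (u : Fin (k+1) → V4) (i j : Fin (k+1)) (hi : u i ∈ Vone) (hj : u j ∈ Vtwo) :
    T u = 0 := by
  have key : ∀ (l : Fin (k+1)) (P : Submodule ℝ V4)
      (hP : ∀ A ∈ sOne, ∀ w ∈ P, A w ∈ P), u l ∈ P → T u ∈ P := by
    intro l P hP hl
    set σ := Equiv.swap l (Fin.last k) with hσ
    have hsymm := hT.1 σ u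
    set u' := fun m => u (σ m) with hu'
    obtain ⟨A, hA, hAeq⟩ := hT.2 (Fin.init u')
    have hulast : u' (Fin.last k) = u l := by
      simp [hu', hσ, Equiv.swap_apply_right]
    have hTu : T u = A (u l) := by
      rw [← hsymm, ← hulast, hAeq]
      congr 1
      exact (Fin.snoc_init_self u').symm
    rw [hTu]
    exact hP A (hsub hA) _ hl
  have h1 : T u ∈ Vone := key i Vone (fun A hA w hw => hA.2.1 w hw) hi
  have h2 : T u ∈ Vtwo := key j Vtwo (fun A hA w hw => hA.2.2 w hw) hj
  exact Vone_inter_Vtwo h1 h2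

/-- `FiniteType` is antitone: a subset of a finite-type set is of finite type. -/
lemma FiniteType.mono {h h' : Set (Module.End ℝ V4)} (hsub : h' ⊆ h)
    (hf : FiniteType h) : FiniteType h' := by
  obtain ⟨k, hk1, hk⟩ := hf
  refine ⟨k, hk1, fun T hT => hk T ⟨hT.1, fun v => ?_⟩⟩
  obtain ⟨A, hA, hAeq⟩ := hT.2 v
  exact ⟨A, hsub hA, hAeq⟩

/-- Fixing the first argument of a symmetric prolongation element. -/
def fixFirst {k : ℕ} (T : MultilinearMap ℝ (fun _ : Fin (k+1+1) => V4) V4)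
    (u : V4) : MultilinearMap ℝ (fun _ : Fin (k+1) => V4) V4 :=
  T.curryLeft u

lemma fixFirst_apply {k : ℕ} (T : MultilinearMap ℝ (fun _ : Fin (k+1+1) => V4) V4)
    (u : V4) (v : Fin (k+1) → V4) : fixFirst T u v = T (Fin.cons u v) := rfl

lemma fixFirst_inProl {h : Set (Module.End ℝ V4)} {k : ℕ}
    {T : MultilinearMap ℝ (fun _ : Fin (k+1+1) => V4) V4}
    (hT : InProl h (k+1) T) (u : V4) : InProl h k (fixFirst T u) := by
  constructor
  · intro σ v
    have := hT.1 (Equiv.Perm.decomposeFin.symm (0, σ)) (Fin.cons u v)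
    rw [fixFirst_apply, fixFirst_apply, ← this]
    congr 1
    funext m
    refine Fin.cases ?_ (fun m => ?_) m
    · simp
    · simp [Equiv.Perm.decomposeFin_symm_apply_succ]
  · intro v
    obtain ⟨A, hA, hAeq⟩ := hT.2 (Fin.cons u v)
    refine ⟨A, hA, fun w => ?_⟩
    rw [hAeq, fixFirst_apply]
    congr 1
    exact (Fin.cons_snoc_eq_snoc_cons u v w).symm

/-- Single-step upward propagation of vanishing. -/
lemma vanish_succ {h : Set (Module.End ℝ V4)} {m : ℕ}
    (hm : ∀ T : MultilinearMap ℝ (fun _ : Fin (m+1) => V4) V4, InProl h m T → T = 0) :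
    ∀ T : MultilinearMap ℝ (fun _ : Fin (m+1+1) => V4) V4, InProl h (m+1) T → T = 0 := by
  intro T hT
  refine MultilinearMap.ext fun v => ?_
  have h0 : ∀ u : V4, fixFirst T u = 0 := fun u =>
    hm (fixFirst T u) (fixFirst_inProl hT u)
  have := congrArg (fun S : MultilinearMap ℝ (fun _ : Fin (m+1) => V4) V4 =>
    S (Fin.tail v)) (h0 (v 0))
  simpa [fixFirst_apply, Fin.cons_self_tail] using this

/-- Vanishing of the prolongation propagates upwards in degree. -/
lemma vanish_mono {h : Set (Module.End ℝ V4)} {k : ℕ}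
    (hk : ∀ T : MultilinearMap ℝ (fun _ : Fin (k+1) => V4) V4, InProl h k T → T = 0)
    {m : ℕ} (hm : k ≤ m) :
    ∀ T : MultilinearMap ℝ (fun _ : Fin (m+1) => V4) V4, InProl h m T → T = 0 := by
  induction m, hm using Nat.le_induction with
  | base => exact hk
  | succ m hm ih => exact vanish_succ ih

/-- Restriction of a prolongation element to `V₁`-arguments lies in the
prolongation of `h ∩ {X ∈ sOne | X kills V₂}`. -/
lemma restrict_one {h : Set (Module.End ℝ V4)} (hsub : h ⊆ sOne) {k : ℕ}
    (hk : 1 ≤ k) {T : MultilinearMap ℝ (fun _ : Fin (k+1) => V4) V4}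
    (hT : InProl h k T) :
    InProl (h ∩ {X ∈ sOne | ∀ w ∈ Vtwo, X w = 0}) k
      (T.compLinearMap (fun _ => piOne)) := by
  constructor
  · intro σ v
    simp only [MultilinearMap.compLinearMap_apply]
    exact hT.1 σ (fun i => piOne (v i))
  · intro v
    obtain ⟨A, hA, hAeq⟩ := hT.2 (fun i => piOne (v i))
    have i0 : Fin k := ⟨0, hk⟩
    have hkill : ∀ w ∈ Vtwo, A w = 0 := by
      intro w hw
      rw [hAeq w]
      refine mixed_vanish hsub hT _ (Fin.castSucc i0) (Fin.last k) ?_ ?_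
      · rw [Fin.snoc_castSucc]; exact piOne_mem _
      · rw [Fin.snoc_last]; exact hw
    refine ⟨A, ⟨hA, hsub hA, hkill⟩, fun w => ?_⟩
    have hw2 : A (piTwo w) = 0 := hkill _ (piTwo_mem w)
    have : A w = A (piOne w) := by
      conv_lhs => rw [← piOne_add_piTwo w]
      rw [map_add, hw2, add_zero]
    rw [this, hAeq]
    simp only [MultilinearMap.compLinearMap_apply]
    congr 1
    funext m
    refine Fin.lastCases ?_ (fun m => ?_) m
    · simp
    · simp

/-- Restriction of a prolongation element to `V₂`-arguments lies in the
prolongation of `h ∩ {X ∈ sOne | X kills V₁}`. -/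
lemma restrict_two {h : Set (Module.End ℝ V4)} (hsub : h ⊆ sOne) {k : ℕ}
    (hk : 1 ≤ k) {T : MultilinearMap ℝ (fun _ : Fin (k+1) => V4) V4}
    (hT : InProl h k T) :
    InProl (h ∩ {X ∈ sOne | ∀ w ∈ Vone, X w = 0}) k
      (T.compLinearMap (fun _ => piTwo)) := by
  constructor
  · intro σ v
    simp only [MultilinearMap.compLinearMap_apply]
    exact hT.1 σ (fun i => piTwo (v i))
  · intro v
    obtain ⟨A, hA, hAeq⟩ := hT.2 (fun i => piTwo (v i))
    have i0 : Fin k := ⟨0, hk⟩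
    have hkill : ∀ w ∈ Vone, A w = 0 := by
      intro w hw
      rw [hAeq w]
      refine mixed_vanish hsub hT _ (Fin.last k) (Fin.castSucc i0) ?_ ?_
      · rw [Fin.snoc_last]; exact hw
      · rw [Fin.snoc_castSucc]; exact piTwo_mem _
    refine ⟨A, ⟨hA, hsub hA, hkill⟩, fun w => ?_⟩
    have hw1 : A (piOne w) = 0 := hkill _ (piOne_mem w)
    have : A w = A (piTwo w) := by
      conv_lhs => rw [← piOne_add_piTwo w]
      rw [map_add, hw1, zero_add]
    rw [this, hAeq]
    simp only [MultilinearMap.compLinearMap_apply]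
    congr 1
    funext m
    refine Fin.lastCases ?_ (fun m => ?_) m
    · simp
    · simp

attribute [local instance] LieRing.ofAssociativeRing

/-- a subalgebra `h ⊆ s₁` has finite type iff both
`h ∩ {X ∈ s₁ : X(V₂) = 0}` and `h ∩ {X ∈ s₁ : X(V₁) = 0}` have finite type. -/
theorem finite_type_in_s1_iff
    (h : LieSubalgebra ℝ (Module.End ℝ V4))
    (hsub : (h : Set (Module.End ℝ V4)) ⊆ sOne) :
    FiniteType (h : Set (Module.End ℝ V4)) ↔
      (FiniteType ((h : Set (Module.End ℝ V4)) ∩ {X ∈ sOne | ∀ w ∈ Vtwo, X w = 0}) ∧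
       FiniteType ((h : Set (Module.End ℝ V4)) ∩ {X ∈ sOne | ∀ w ∈ Vone, X w = 0})) := by
  constructor
  · intro hf
    exact ⟨FiniteType.mono Set.inter_subset_left hf,
           FiniteType.mono Set.inter_subset_left hf⟩
  · rintro ⟨⟨k₁, hk₁1, hk₁⟩, ⟨k₂, hk₂1, hk₂⟩⟩
    set k := max k₁ k₂ with hkdef
    have hk1 : 1 ≤ k := le_trans hk₁1 (le_max_left _ _)
    refine ⟨k, hk1, fun T hT => ?_⟩
    -- the two restricted maps vanish
    have hT1 : T.compLinearMap (fun _ => piOne) = 0 :=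
      vanish_mono hk₁ (le_max_left _ _) _ (restrict_one hsub hk1 hT)
    have hT2 : T.compLinearMap (fun _ => piTwo) = 0 :=
      vanish_mono hk₂ (le_max_right _ _) _ (restrict_two hsub hk1 hT)
    refine MultilinearMap.ext fun u => ?_
    have hdecomp : u = (fun i => piOne (u i)) + fun i => piTwo (u i) := by
      funext i; exact (piOne_add_piTwo (u i)).symm
    have := T.map_add_univ (fun i => piOne (u i)) (fun i => piTwo (u i))
    rw [← hdecomp] at this
    rw [this]
    refine Finset.sum_eq_zero fun s _ => ?_
    by_cases hsu : s = Finset.univ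
    · subst hsu
      have : (Finset.univ.piecewise (fun i => piOne (u i)) fun i => piTwo (u i))
          = fun i => piOne (u i) := Finset.piecewise_univ _ _
      rw [this]
      have := congrArg (fun S : MultilinearMap ℝ (fun _ : Fin (k+1) => V4) V4 =>
        S u) hT1
      simpa using this
    by_cases hse : s = ∅
    · subst hse
      have : ((∅ : Finset (Fin (k+1))).piecewise (fun i => piOne (u i))
          fun i => piTwo (u i)) = fun i => piTwo (u i) := Finset.piecewise_empty _ _
      rw [this]
      have := congrArg (fun S : MultilinearMap ℝ (fun _ : Fin (k+1) => V4) V4 =>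
        S u) hT2
      simpa using this
    · obtain ⟨i, hi⟩ := Finset.nonempty_iff_ne_empty.mpr hse
      obtain ⟨j, hj⟩ : ∃ j, j ∉ s := by
        by_contra hc
        push_neg at hc
        exact hsu (Finset.eq_univ_iff_forall.mpr hc)
      refine mixed_vanish hsub hT _ i j ?_ ?_
      · rw [Finset.piecewise_eq_of_mem _ _ _ hi]; exact piOne_mem _
      · rw [Finset.piecewise_eq_of_notMem _ _ _ hj]; exact piTwo_mem _
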